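/- For the permutation V_n (all numbers in {1,...,n} of the same parity as n in increasing order, followed by the remaining numbers in decreasing order), SC_231(V_n) equals n followed by V_{n-1} (with V_{n-1} on values {1,...,n-1}). -/

import Mathlib

/-- One step-by-step implementation of the `SC_231` stack-sorting machine.
`sc231Aux input stack out`: the next input entry is pushed onto the stack unless
pushing it would create a consecutive occurrence of the pattern `231` read from
top to bottom among the stack entries (i.e. the incoming `x` on top of `y`, `z`
with `z < x < y`), in which case the top of the stack is popped and appended to
the output; once the input is exhausted the remaining stack entries are popped. -/
def sc231Aux : List ℕ → List ℕ → List ℕ → List ℕ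
  | [], stack, out => out ++ stack
  | x :: rest, y :: z :: s, out =>
      if z < x ∧ x < y then sc231Aux (x :: rest) (z :: s) (out ++ [y])
      else sc231Aux rest (x :: y :: z :: s) out
  | x :: rest, stack, out => sc231Aux rest (x :: stack) out
termination_by input stack _ => 2 * input.length + stack.length
decreasing_by all_goals (simp; try omega)

/-- The consecutive-pattern-avoiding stack sort map `SC_231`. -/
def SC231 (p : List ℕ) : List ℕ := sc231Aux p [] []

/-- The list of entries that are *pre-popped* while `SC_231` processes the
input, i.e. popped while input entries still remain. -/
def prePopsAux : List ℕ → List ℕ → List ℕ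
  | [], _ => []
  | x :: rest, y :: z :: s =>
      if z < x ∧ x < y then y :: prePopsAux (x :: rest) (z :: s)
      else prePopsAux rest (x :: y :: z :: s)
  | x :: rest, stack => prePopsAux rest (x :: stack)
termination_by input stack => 2 * input.length + stack.length
decreasing_by all_goals (simp; try omega)

def prePops (p : List ℕ) : List ℕ := prePopsAux p []

/-- `p` has a peak: an interior position whose entry exceeds both neighbours. -/
def HasPeak (p : List ℕ) : Prop :=
  ∃ i, i + 2 < p.length ∧ p[i]! < p[i+1]! ∧ p[i+2]! < p[i+1]!

/-- `p` is a permutation of `{1, …, n}` (written as a list of its entries). -/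
def IsPermOf (n : ℕ) (p : List ℕ) : Prop := p.Perm (List.range' 1 n)

/-- `p` contains the (classical) pattern `q`. -/
def ContainsPat (p q : List ℕ) : Prop :=
  ∃ s : List ℕ, s.Sublist p ∧ s.length = q.length ∧
    ∀ i j, i < s.length → j < s.length → (s[i]! < s[j]! ↔ q[i]! < q[j]!)

def AvoidsPat (p q : List ℕ) : Prop := ¬ ContainsPat p q

/-- The sort-number of `p`: the least `k` with `SC_231^k(p)` peakless. -/
noncomputable def sortNum (p : List ℕ) : ℕ := sInf {k | ¬ HasPeak (SC231^[k] p)}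

/-- `V_n`: the numbers in `{1,…,n}` with the same parity as `n` in increasing order,
followed by the remaining numbers in decreasing order (e.g. `V_6 = 246531`). -/
def Vperm (n : ℕ) : List ℕ :=
  ((List.range' 1 n).filter (fun i => i % 2 == n % 2)) ++
    (((List.range' 1 n).filter (fun i => i % 2 != n % 2)).reverse)

lemma sc231Aux_nil (s out : List ℕ) : sc231Aux [] s out = out ++ s := by rw [sc231Aux]

lemma sc231Aux_push (x : ℕ) (rest stack out : List ℕ)
    (h : ∀ y z s, stack = y :: z :: s → ¬ (z < x ∧ x < y)) :
    sc231Aux (x :: rest) stack out = sc231Aux rest (x :: stack) out := by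
  match stack with
  | [] => rw [sc231Aux]; simp
  | [y] => rw [sc231Aux]; simp
  | y :: z :: s => rw [sc231Aux]; simp [h y z s rfl]

lemma sc231Aux_pop (x y z : ℕ) (rest s out : List ℕ) (h1 : z < x) (h2 : x < y) :
    sc231Aux (x :: rest) (y :: z :: s) out = sc231Aux (x :: rest) (z :: s) (out ++ [y]) := by
  rw [sc231Aux]; simp [h1, h2]

lemma pushA (L : List ℕ) (hL : L.Pairwise (· ≤ ·)) :
    ∀ rest stack out, (∀ x ∈ L, ∀ y ∈ stack, y ≤ x) →
    sc231Aux (L ++ rest) stack out = sc231Aux rest (L.reverse ++ stack) out := by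
  induction L with
  | nil => simp
  | cons x L ih =>
    intro rest stack out h
    rw [List.pairwise_cons] at hL
    rw [List.cons_append, sc231Aux_push x _ _ _ (by
      rintro y z s rfl
      have := h x (by simp) y (by simp)
      omega)]
    rw [ih hL.2 rest (x :: stack) out (by
      intro a ha b hb
      rcases List.mem_cons.mp hb with rfl | hb
      · exact hL.1 a ha
      · exact h a (by simp [ha]) b hb)]
    simp

lemma pushB (L : List ℕ) (hL : L.Pairwise (· > ·)) :
    ∀ rest (y z : ℕ) (s out : List ℕ), (∀ x ∈ L, x < y ∧ x < z) →
    sc231Aux (L ++ rest) (y :: z :: s) out = sc231Aux rest (L.reverse ++ y :: z :: s) out := by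
  induction L with
  | nil => simp
  | cons x L ih =>
    intro rest y z s out h
    rw [List.pairwise_cons] at hL
    have hx := h x (by simp)
    rw [List.cons_append, sc231Aux_push x _ _ _ (by
      rintro y' z' s' heq
      rw [List.cons_eq_cons] at heq
      obtain ⟨rfl, heq⟩ := heq
      rw [List.cons_eq_cons] at heq
      obtain ⟨rfl, -⟩ := heq
      omega)]
    rw [ih hL.2 rest x y (z :: s) out (by
      intro a ha
      exact ⟨hL.1 a ha, (h a (by simp [ha])).1⟩)]
    simp

lemma filter_parity (m : ℕ) :
    (List.range' 1 (2*m)).filter (fun i => i % 2 == 0) = List.range' 2 m 2 ∧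
    (List.range' 1 (2*m)).filter (fun i => i % 2 == 1) = List.range' 1 m 2 := by
  induction m with
  | zero => simp
  | succ m ih =>
    have h1 : 2 * (m + 1) = (2*m + 1) + 1 := by ring
    rw [h1, List.range'_concat, List.range'_concat (step := 1), List.range'_concat (step := 2),
      List.range'_concat (step := 2)]
    have e1 : (1 + (2*m+1)) % 2 = 0 := by omega
    have e2 : (1 + 2*m) % 2 = 1 := by omega
    simp [List.filter_append, ih.1, ih.2, e1, e2]
    omega

lemma Vperm_even (m : ℕ) :
    Vperm (2*m) = List.range' 2 m 2 ++ (List.range' 1 m 2).reverse := by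
  unfold Vperm
  have h0 : 2 * m % 2 = 0 := by omega
  rw [h0]
  have h1 : (List.range' 1 (2*m)).filter (fun i => i % 2 != 0)
      = (List.range' 1 (2*m)).filter (fun i => i % 2 == 1) := by
    apply List.filter_congr
    intro x _
    have : x % 2 = 0 ∨ x % 2 = 1 := by omega
    rcases this with h | h <;> simp [h]
  rw [h1, (filter_parity m).1, (filter_parity m).2]

lemma Vperm_odd (m : ℕ) :
    Vperm (2*m+1) = List.range' 1 (m+1) 2 ++ (List.range' 2 m 2).reverse := by
  unfold Vperm
  have h0 : (2 * m + 1) % 2 = 1 := by omega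
  rw [h0]
  have h1 : (List.range' 1 (2*m+1)).filter (fun i => i % 2 != 1)
      = (List.range' 1 (2*m+1)).filter (fun i => i % 2 == 0) := by
    apply List.filter_congr
    intro x _
    have : x % 2 = 0 ∨ x % 2 = 1 := by omega
    rcases this with h | h <;> simp [h]
  have h2 : (2*m+1) = 2*m + 1 := rfl
  rw [h1, List.range'_concat (step := 1), List.filter_append, List.filter_append,
    (filter_parity m).1, (filter_parity m).2]
  have e1 : (1 + 2*m) % 2 = 1 := by omega
  simp [e1, List.range'_concat (step := 2)]

lemma range'_lt (x s m : ℕ) (h : x ∈ List.range' s m 2) : x < s + 2*m := by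
  rw [List.mem_range'] at h; omega

lemma range'_pw_le (s m : ℕ) : (List.range' s m 2).Pairwise (· ≤ ·) :=
  (List.pairwise_lt_range' (s := s) (n := m) 2 (by omega)).imp (fun h => le_of_lt h)

lemma range'_rev_pw_gt (s m : ℕ) : ((List.range' s m 2).reverse).Pairwise (· > ·) := by
  rw [List.pairwise_reverse]
  exact List.pairwise_lt_range' (s := s) (n := m) 2 (by omega)

/-- `SC_231(V_n) = n` followed by `V_{n-1}`. -/
theorem SC231_Vperm (n : ℕ) (hn : 3 ≤ n) :
    SC231 (Vperm n) = n :: Vperm (n - 1) := by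
  rcases Nat.even_or_odd n with ⟨m, hm⟩ | ⟨m, hm⟩
  · -- n = 2m, m ≥ 2
    obtain ⟨k, rfl⟩ : ∃ k, m = k + 2 := ⟨m - 2, by omega⟩
    have hm2 : n = 2 * (k + 2) := by omega
    subst hm2
    have hsub : 2 * (k + 2) - 1 = 2 * (k + 1) + 1 := by omega
    rw [hsub, Vperm_even, Vperm_odd, SC231]
    have d1 : List.range' 1 (k+2) 2 = List.range' 1 (k+1) 2 ++ [2*k+3] := by
      rw [List.range'_concat]; simp; omega
    have d2 : List.range' 2 (k+2) 2 = (List.range' 2 k 2 ++ [2*k+2]) ++ [2*k+4] := by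
      rw [List.range'_concat, List.range'_concat]; simp; omega
    rw [pushA _ (range'_pw_le 2 (k+2)) _ [] [] (by simp)]
    rw [d1, d2]
    simp only [List.reverse_append, List.reverse_cons, List.reverse_nil, List.nil_append,
      List.append_nil, List.cons_append, List.singleton_append]
    rw [sc231Aux_pop (2*k+3) (2*k+4) (2*k+2) _ _ _ (by omega) (by omega)]
    rw [sc231Aux_push (2*k+3) _ _ _ (by
      rintro y z s heq
      rw [List.cons_eq_cons] at heq
      obtain ⟨h1, -⟩ := heq
      omega)]
    rw [show ((List.range' 1 (k+1) 2).reverse)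
        = (List.range' 1 (k+1) 2).reverse ++ [] from (List.append_nil _).symm]
    rw [pushB _ (range'_rev_pw_gt 1 (k+1)) [] _ _ _ _ (by
      intro x hx
      rw [List.mem_reverse, List.mem_range'] at hx
      omega)]
    rw [sc231Aux_nil]
    have d3 : List.range' 2 (k+1) 2 = List.range' 2 k 2 ++ [2*k+2] := by
      rw [List.range'_concat]; simp; omega
    rw [d3]
    simp [List.reverse_append]
    omega
  · -- n = 2m+1, m ≥ 1
    obtain ⟨k, rfl⟩ : ∃ k, m = k + 1 := ⟨m - 1, by omega⟩
    have hm2 : n = 2 * (k + 1) + 1 := by omega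
    subst hm2
    have hsub : 2 * (k + 1) + 1 - 1 = 2 * (k + 1) := by omega
    rw [hsub, Vperm_odd, Vperm_even, SC231]
    have d1 : List.range' 1 (k+2) 2 = (List.range' 1 k 2 ++ [2*k+1]) ++ [2*k+3] := by
      rw [List.range'_concat, List.range'_concat]; simp; omega
    have d2 : List.range' 2 (k+1) 2 = List.range' 2 k 2 ++ [2*k+2] := by
      rw [List.range'_concat]; simp; omega
    rw [pushA _ (range'_pw_le 1 (k+2)) _ [] [] (by simp)]
    rw [d1, d2]
    simp only [List.reverse_append, List.reverse_cons, List.reverse_nil, List.nil_append,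
      List.append_nil, List.cons_append, List.singleton_append]
    rw [sc231Aux_pop (2*k+2) (2*k+3) (2*k+1) _ _ _ (by omega) (by omega)]
    rw [sc231Aux_push (2*k+2) _ _ _ (by
      rintro y z s heq
      rw [List.cons_eq_cons] at heq
      obtain ⟨h1, -⟩ := heq
      omega)]
    rw [show ((List.range' 2 k 2).reverse)
        = (List.range' 2 k 2).reverse ++ [] from (List.append_nil _).symm]
    rw [pushB _ (range'_rev_pw_gt 2 k) [] _ _ _ _ (by
      intro x hx
      rw [List.mem_reverse, List.mem_range'] at hx
      omega)]
    rw [sc231Aux_nil]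
    have d4 : List.range' 1 (k+1) 2 = List.range' 1 k 2 ++ [2*k+1] := by
      rw [List.range'_concat]; simp; omega
    rw [d4]
    simp [List.reverse_append]
    omega
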